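/- Let U_0 denote either U_{v_0,g_0} or U_{v_0}. There exists a constant C, depending only on Ω, v_0 and the functions F_i but independent of ε ∈ (0,1) and β > 0, such that every minimizer u of J_{ε,β} on U_0 satisfies |J_{ε,β}(u)| ≤ C ε. -/

import Mathlib

open MeasureTheory Real Set Filter RealInnerProductSpace

noncomputable section

/-- Points of the ambient Euclidean space `ℝ^N`. -/
abbrev Pt (N : ℕ) := EuclideanSpace ℝ (Fin N)

/-- Time derivative `∂_t v_i` of the `i`-th component of `v`. -/
def tder {N k : ℕ} (v : Pt N → ℝ → Fin k → ℝ) (i : Fin k) (x : Pt N) (t : ℝ) : ℝ :=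
  deriv (fun s => v x s i) t

/-- Spatial gradient `∇v_i` of the `i`-th component of `v`. -/
def sgrad {N k : ℕ} (v : Pt N → ℝ → Fin k → ℝ) (i : Fin k) (x : Pt N) (t : ℝ) : Pt N :=
  gradient (fun y => v y t i) x

/-- Time derivative of a scalar function of `(x,t)`. -/
def tdS {N : ℕ} (φ : Pt N → ℝ → ℝ) (x : Pt N) (t : ℝ) : ℝ := deriv (φ x) t

/-- Spatial gradient of a scalar function of `(x,t)`. -/
def sgS {N : ℕ} (φ : Pt N → ℝ → ℝ) (x : Pt N) (t : ℝ) : Pt N :=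
  gradient (fun y => φ y t) x

/-- The product (Lebesgue) measure on `Ω × (0,T)`. -/
def μT {N : ℕ} (Ω : Set (Pt N)) (T : ℝ) : Measure (Pt N × ℝ) :=
  (volume.restrict Ω).prod (volume.restrict (Set.Ioo 0 T))

/-- The product (Lebesgue) measure on `Ω × (0,∞)`. -/
def μI {N : ℕ} (Ω : Set (Pt N)) : Measure (Pt N × ℝ) :=
  (volume.restrict Ω).prod (volume.restrict (Set.Ioi 0))

/-- Membership in `U = ∩_{T>0} H¹(Ω×(0,T))^k`: each component, its time derivative and its
spatial gradient are square integrable on `Ω × (0,T)` for every `T > 0`. -/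
def memU {N k : ℕ} (Ω : Set (Pt N)) (v : Pt N → ℝ → Fin k → ℝ) : Prop :=
  ∀ T > 0, ∀ i : Fin k,
    MemLp (fun p : Pt N × ℝ => v p.1 p.2 i) 2 (μT Ω T) ∧
    MemLp (fun p : Pt N × ℝ => tder v i p.1 p.2) 2 (μT Ω T) ∧
    MemLp (fun p : Pt N × ℝ => sgrad v i p.1 p.2) 2 (μT Ω T)

/-- The data of the problem: a bounded domain `Ω ⊂ ℝ^N`, a symmetric interaction matrix `A`
with zero diagonal and positive off-diagonal entries, potentials `F_i` and an initial datum
`v₀ ∈ H¹(Ω)^k` with `0 ≤ v₀ ≤ 1` and segregated components (whose trace on `∂Ω` is `g₀`). -/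
structure Setting (N k : ℕ) where
  Ω : Set (Pt N)
  hk : 2 ≤ k
  hΩopen : IsOpen Ω
  hΩconn : IsConnected Ω
  hΩbdd : Bornology.IsBounded Ω
  A : Fin k → Fin k → ℝ
  hAsymm : ∀ i j, A i j = A j i
  hAdiag : ∀ i, A i i = 0
  hAoff : ∀ i j, i ≠ j → 0 < A i j
  Fc : Fin k → ℝ → ℝ
  hFcont : ∀ i, Continuous (Fc i)
  hFdiff : ∀ i, ∀ s ∈ Set.Ico (0:ℝ) 1, DifferentiableAt ℝ (Fc i) s
  hFnondec : ∀ i, MonotoneOn (Fc i) (Set.Iio (0:ℝ))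
  hFnoninc : ∀ i, AntitoneOn (Fc i) (Set.Ioi (1:ℝ))
  hFderiv0 : ∀ i, deriv (Fc i) 0 = 0
  v0 : Pt N → Fin k → ℝ
  hv0L2 : ∀ i, MemLp (fun x => v0 x i) 2 (volume.restrict Ω)
  hv0grad : ∀ i, MemLp (fun x => gradient (fun y => v0 y i) x) 2 (volume.restrict Ω)
  hv0bdd : ∀ᵐ x ∂(volume.restrict Ω), ∀ i, v0 x i ∈ Set.Icc (0:ℝ) 1
  hv0seg : ∀ᵐ x ∂(volume.restrict Ω), ∀ i j, i ≠ j → v0 x i * v0 x j = 0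

variable {N k : ℕ}

/-- `f_i := F_i'`. -/
def fder (S : Setting N k) (i : Fin k) (s : ℝ) : ℝ := deriv (S.Fc i) s

/-- The functional `F_{ε,β}`. -/
def Feb (S : Setting N k) (ε β : ℝ) (v : Pt N → ℝ → Fin k → ℝ) : ℝ :=
  ∫ t in Set.Ioi (0:ℝ), ∫ x in S.Ω,
    (Real.exp (-t/ε) / ε) *
      (ε * ∑ i, (tder v i x t)^2 + ∑ i, ‖sgrad v i x t‖^2
        - 2 * ∑ i, S.Fc i (v x t i)
        + (β/2) * ∑ i, ∑ j, S.A i j * (v x t i)^2 * (v x t j)^2)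

/-- The rescaled functional `J_{ε,β}`. -/
def Jeb (S : Setting N k) (ε β : ℝ) (u : Pt N → ℝ → Fin k → ℝ) : ℝ :=
  ∫ t in Set.Ioi (0:ℝ), ∫ x in S.Ω,
    Real.exp (-t) *
      (∑ i, (tder u i x t)^2
        + ε * (∑ i, ‖sgrad u i x t‖^2 - 2 * ∑ i, S.Fc i (u x t i)
          + (β/2) * ∑ i, ∑ j, S.A i j * (u x t i)^2 * (u x t j)^2))

/-- Initial condition `v(·,0) = v₀` a.e. in `Ω`. -/
def initCond (S : Setting N k) (v : Pt N → ℝ → Fin k → ℝ) : Prop :=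
  ∀ᵐ x ∂(volume.restrict S.Ω), v x 0 = S.v0 x

/-- Boundary condition `v(·,t) = g₀` on `∂Ω` for a.e. `t > 0` (where `g₀` is the trace
of `v₀` on `∂Ω`). -/
def bdryCond (S : Setting N k) (v : Pt N → ℝ → Fin k → ℝ) : Prop :=
  ∀ᵐ t ∂(volume.restrict (Set.Ioi (0:ℝ))), ∀ x ∈ frontier S.Ω, v x t = S.v0 x

/-- The set `U_{v₀,g₀}`. -/
def Uboth (S : Setting N k) : Set (Pt N → ℝ → Fin k → ℝ) :=
  {v | memU S.Ω v ∧ initCond S v ∧ bdryCond S v}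

/-- The set `U_{v₀}`. -/
def Uinit (S : Setting N k) : Set (Pt N → ℝ → Fin k → ℝ) :=
  {v | memU S.Ω v ∧ initCond S v}

/-- The set `U_{g₀}`. -/
def Ubdry (S : Setting N k) : Set (Pt N → ℝ → Fin k → ℝ) :=
  {v | memU S.Ω v ∧ bdryCond S v}

/-- `v` has segregated components: `v_i · v_j = 0` a.e. in `Ω × (0,∞)` for `i ≠ j`. -/
def segregated (S : Setting N k) (v : Pt N → ℝ → Fin k → ℝ) : Prop :=
  ∀ᵐ p ∂(μI S.Ω), ∀ i j, i ≠ j → v p.1 p.2 i * v p.1 p.2 j = 0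

/-- The set `U_seg` of segregated configurations inside `U₀`. -/
def Useg (S : Setting N k) (U0 : Set (Pt N → ℝ → Fin k → ℝ)) :
    Set (Pt N → ℝ → Fin k → ℝ) :=
  {v ∈ U0 | segregated S v}

/-- `I(t) = ∫_Ω |∂_t u|² dx`. -/
def Ifun (S : Setting N k) (u : Pt N → ℝ → Fin k → ℝ) (t : ℝ) : ℝ :=
  ∫ x in S.Ω, ∑ i, (tder u i x t)^2

/-- `R(t) = ε ∫_Ω { |∇u|² − 2F(u) + (β/2)⟨u²,Au²⟩ } dx`. -/
def Rfun (S : Setting N k) (ε β : ℝ) (u : Pt N → ℝ → Fin k → ℝ) (t : ℝ) : ℝ :=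
  ε * ∫ x in S.Ω, (∑ i, ‖sgrad u i x t‖^2 - 2 * ∑ i, S.Fc i (u x t i)
    + (β/2) * ∑ i, ∑ j, S.A i j * (u x t i)^2 * (u x t j)^2)

/-- The energy function `E(t) = e^t ∫_t^∞ e^{−τ}(I(τ)+R(τ)) dτ`. -/
def Efun (S : Setting N k) (ε β : ℝ) (u : Pt N → ℝ → Fin k → ℝ) (t : ℝ) : ℝ :=
  Real.exp t * ∫ τ in Set.Ioi t, Real.exp (-τ) * (Ifun S u τ + Rfun S ε β u τ)

/-- Squared `H¹(Ω×(0,T))^k` distance between `v` and `w`. -/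
def H1diff {N k : ℕ} (Ω : Set (Pt N)) (T : ℝ) (v w : Pt N → ℝ → Fin k → ℝ) : ℝ :=
  ∫ p, (∑ i, ((v p.1 p.2 i - w p.1 p.2 i)^2
    + (tder v i p.1 p.2 - tder w i p.1 p.2)^2
    + ‖sgrad v i p.1 p.2 - sgrad w i p.1 p.2‖^2)) ∂(μT Ω T)

/-- Strong convergence in `U`: convergence in `H¹(Ω×(0,T))^k` for every `T > 0`. -/
def strongU {N k : ℕ} (Ω : Set (Pt N)) (vn : ℕ → (Pt N → ℝ → Fin k → ℝ))
    (v : Pt N → ℝ → Fin k → ℝ) : Prop :=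
  ∀ T > 0, Tendsto (fun n => H1diff Ω T (vn n) v) atTop (nhds 0)

/-- Weak convergence in `U`: for every `T > 0`, the functions, their time derivatives and
their spatial gradients converge weakly in `L²(Ω×(0,T))`. -/
def weakU {N k : ℕ} (Ω : Set (Pt N)) (vn : ℕ → (Pt N → ℝ → Fin k → ℝ))
    (v : Pt N → ℝ → Fin k → ℝ) : Prop :=
  ∀ T > 0, ∀ i : Fin k,
    (∀ g : Pt N × ℝ → ℝ, MemLp g 2 (μT Ω T) →
      Tendsto (fun n => ∫ p, vn n p.1 p.2 i * g p ∂(μT Ω T)) atTop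
        (nhds (∫ p, v p.1 p.2 i * g p ∂(μT Ω T))) ∧
      Tendsto (fun n => ∫ p, tder (vn n) i p.1 p.2 * g p ∂(μT Ω T)) atTop
        (nhds (∫ p, tder v i p.1 p.2 * g p ∂(μT Ω T)))) ∧
    (∀ G : Pt N × ℝ → Pt N, MemLp G 2 (μT Ω T) →
      Tendsto (fun n => ∫ p, ⟪sgrad (vn n) i p.1 p.2, G p⟫ ∂(μT Ω T)) atTop
        (nhds (∫ p, ⟪sgrad v i p.1 p.2, G p⟫ ∂(μT Ω T))))

/-- Pointwise a.e. convergence in `Ω × (0,∞)`. -/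
def aeConv {N k : ℕ} (Ω : Set (Pt N)) (vn : ℕ → (Pt N → ℝ → Fin k → ℝ))
    (v : Pt N → ℝ → Fin k → ℝ) : Prop :=
  ∀ᵐ p ∂(μI Ω), Tendsto (fun n => vn n p.1 p.2) atTop (nhds (v p.1 p.2))

/-- `‖v‖_{L^∞(Ω×(0,∞))^k} ≤ C`. -/
def aeBdd {N k : ℕ} (Ω : Set (Pt N)) (v : Pt N → ℝ → Fin k → ℝ) (C : ℝ) : Prop :=
  ∀ᵐ p ∂(μI Ω), ∀ i, |v p.1 p.2 i| ≤ C

/-- The interaction integral `∫_0^T ∫_Ω ⟨v²,Av²⟩ dx dt`. -/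
def interQ (S : Setting N k) (v : Pt N → ℝ → Fin k → ℝ) (T : ℝ) : ℝ :=
  ∫ t in Set.Ioo (0:ℝ) T, ∫ x in S.Ω, ∑ i, ∑ j, S.A i j * (v x t i)^2 * (v x t j)^2

/-- `v̂_i = v_i − Σ_{j≠i} v_j`. -/
def vhat {N k : ℕ} (v : Pt N → ℝ → Fin k → ℝ) (i : Fin k) (x : Pt N) (t : ℝ) : ℝ :=
  v x t i - ∑ j ∈ Finset.univ.erase i, v x t j

/-- `f̂_i = f_i(v_i) − Σ_{j≠i} f_j(v_j)`. -/
def fhat (S : Setting N k) (v : Pt N → ℝ → Fin k → ℝ) (i : Fin k) (x : Pt N) (t : ℝ) : ℝ :=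
  fder S i (v x t i) - ∑ j ∈ Finset.univ.erase i, fder S j (v x t j)

/-- Membership in `H¹(Ω)^k` for a time-independent function. -/
def memH1 {N k : ℕ} (Ω : Set (Pt N)) (w : Pt N → Fin k → ℝ) : Prop :=
  ∀ i : Fin k, MemLp (fun x => w x i) 2 (volume.restrict Ω) ∧
    MemLp (fun x => gradient (fun y => w y i) x) 2 (volume.restrict Ω)

/-- The elliptic energy `E_β`. -/
def Eell (S : Setting N k) (β : ℝ) (w : Pt N → Fin k → ℝ) : ℝ :=
  ∫ x in S.Ω, (∑ i, ‖gradient (fun y => w y i) x‖^2 - 2 * ∑ i, S.Fc i (w x i)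
    + (β/2) * ∑ i, ∑ j, S.A i j * (w x i)^2 * (w x j)^2)

/-- `w = g₀` on `∂Ω` (where `g₀` is the trace of `v₀`). -/
def bdryEq (S : Setting N k) (w : Pt N → Fin k → ℝ) : Prop :=
  ∀ x ∈ frontier S.Ω, w x = S.v0 x

/-- `u` solves the elliptic minimization problem `min{E_β(w) : w ∈ H¹(Ω)^k, w = g₀ on ∂Ω}`. -/
def solvesEll (S : Setting N k) (β : ℝ) (u : Pt N → Fin k → ℝ) : Prop :=
  memH1 S.Ω u ∧ bdryEq S u ∧
    ∀ w, memH1 S.Ω w → bdryEq S w → Eell S β u ≤ Eell S β w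

/-- Weak convergence in `H¹(Ω)^k`. -/
def weakH1 {N k : ℕ} (Ω : Set (Pt N)) (wn : ℕ → (Pt N → Fin k → ℝ))
    (w : Pt N → Fin k → ℝ) : Prop :=
  ∀ i : Fin k,
    (∀ g : Pt N → ℝ, MemLp g 2 (volume.restrict Ω) →
      Tendsto (fun n => ∫ x in Ω, wn n x i * g x) atTop (nhds (∫ x in Ω, w x i * g x))) ∧
    (∀ G : Pt N → Pt N, MemLp G 2 (volume.restrict Ω) →
      Tendsto (fun n => ∫ x in Ω, ⟪gradient (fun y => wn n y i) x, G x⟫) atTop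
        (nhds (∫ x in Ω, ⟪gradient (fun y => w y i) x, G x⟫)))


section Aux

variable {N k : ℕ}

/-- Each potential `F_i` is bounded above on all of `ℝ`. -/
lemma Fc_bound (S : Setting N k) (i : Fin k) : ∃ M : ℝ, 0 ≤ M ∧ ∀ s : ℝ, S.Fc i s ≤ M := by
  obtain ⟨s₀, hs₀, hmax⟩ := isCompact_Icc.exists_isMaxOn (s := Set.Icc (0:ℝ) 1)
    ⟨0, by norm_num⟩ ((S.hFcont i).continuousOn)
  refine ⟨max (S.Fc i s₀) 0, le_max_right _ _, fun s => ?_⟩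
  have hmax' : ∀ x ∈ Set.Icc (0:ℝ) 1, S.Fc i x ≤ S.Fc i s₀ := fun x hx => hmax hx
  rcases lt_or_ge s 0 with hs | hs
  · have h0 : S.Fc i s ≤ S.Fc i 0 := by
      have ht : Tendsto (S.Fc i) (nhdsWithin 0 (Set.Iio 0)) (nhds (S.Fc i 0)) :=
        ((S.hFcont i).tendsto 0).mono_left nhdsWithin_le_nhds
      refine ge_of_tendsto ht ?_
      have h1 : Set.Ioo s 0 ∈ nhdsWithin (0:ℝ) (Set.Iio 0) :=
        Ioo_mem_nhdsLT_of_mem ⟨hs, le_refl _⟩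
      filter_upwards [h1] with s' hs'
      exact S.hFnondec i hs hs'.2 hs'.1.le
    exact le_trans h0 (le_trans (hmax' 0 (by norm_num)) (le_max_left _ _))
  rcases le_or_gt s 1 with hs1 | hs1
  · exact le_trans (hmax' s ⟨hs, hs1⟩) (le_max_left _ _)
  · have h0 : S.Fc i s ≤ S.Fc i 1 := by
      have ht : Tendsto (S.Fc i) (nhdsWithin 1 (Set.Ioi 1)) (nhds (S.Fc i 1)) :=
        ((S.hFcont i).tendsto 1).mono_left nhdsWithin_le_nhds
      refine ge_of_tendsto ht ?_
      have h1 : Set.Ioo 1 s ∈ nhdsWithin (1:ℝ) (Set.Ioi 1) :=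
        Ioo_mem_nhdsGT_of_mem ⟨le_refl _, hs1⟩
      filter_upwards [h1] with s' hs'
      exact S.hFnoninc i hs'.1 hs1 hs'.2.le
    exact le_trans h0 (le_trans (hmax' 1 (by norm_num)) (le_max_left _ _))

/-- The static extension of `v₀` belongs to `U`. -/
lemma static_memU (S : Setting N k) : memU S.Ω (fun x (_ : ℝ) => S.v0 x) := by
  intro T hT i
  have hfin : (volume.restrict (Set.Ioo (0:ℝ) T)) Set.univ ≠ ⊤ := by
    simp [Measure.restrict_apply_univ, Real.volume_Ioo]
  refine ⟨?_, ?_, ?_⟩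
  · have h := (S.hv0L2 i).smul_measure hfin
    rw [← Measure.map_fst_prod] at h
    exact h.comp_of_map measurable_fst.aemeasurable
  · have hz : (fun p : Pt N × ℝ => tder (fun x (_ : ℝ) => S.v0 x) i p.1 p.2)
        = fun _ => (0 : ℝ) := by
      funext p; simp [tder]
    rw [hz]
    exact MemLp.zero'
  · have h := (S.hv0grad i).smul_measure hfin
    rw [← Measure.map_fst_prod] at h
    exact h.comp_of_map measurable_fst.aemeasurable

/-- The value of `J_{ε,β}` at the static extension of `v₀`. -/
lemma Jeb_static (S : Setting N k) (ε β : ℝ) :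
    Jeb S ε β (fun x (_ : ℝ) => S.v0 x)
      = ε * ∫ x in S.Ω, (∑ i, ‖gradient (fun y => S.v0 y i) x‖^2
          - 2 * ∑ i, S.Fc i (S.v0 x i)) := by
  set g : Pt N → ℝ := fun x => ∑ i, ‖gradient (fun y => S.v0 y i) x‖^2
    - 2 * ∑ i, S.Fc i (S.v0 x i) with hg
  have key : ∀ t : ℝ, (∫ x in S.Ω,
      Real.exp (-t) * (∑ i, (tder (fun x (_ : ℝ) => S.v0 x) i x t)^2
        + ε * (∑ i, ‖sgrad (fun x (_ : ℝ) => S.v0 x) i x t‖^2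
          - 2 * ∑ i, S.Fc i (S.v0 x i)
          + (β/2) * ∑ i, ∑ j, S.A i j * (S.v0 x i)^2 * (S.v0 x j)^2)))
      = Real.exp (-t) * (ε * ∫ x in S.Ω, g x) := by
    intro t
    have hae : (fun x => Real.exp (-t) * (∑ i, (tder (fun x (_ : ℝ) => S.v0 x) i x t)^2
        + ε * (∑ i, ‖sgrad (fun x (_ : ℝ) => S.v0 x) i x t‖^2
          - 2 * ∑ i, S.Fc i (S.v0 x i)
          + (β/2) * ∑ i, ∑ j, S.A i j * (S.v0 x i)^2 * (S.v0 x j)^2)))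
        =ᵐ[volume.restrict S.Ω] fun x => (Real.exp (-t) * ε) * g x := by
      filter_upwards [S.hv0seg] with x hx
      have hinter : ∑ i, ∑ j, S.A i j * (S.v0 x i)^2 * (S.v0 x j)^2 = 0 := by
        apply Finset.sum_eq_zero; intro i _
        apply Finset.sum_eq_zero; intro j _
        rcases eq_or_ne i j with rfl | hij
        · simp [S.hAdiag]
        · have h2 : S.v0 x i * S.v0 x j = 0 := hx i j hij
          have : (S.v0 x i)^2 * (S.v0 x j)^2 = (S.v0 x i * S.v0 x j)^2 := by ring
          rw [mul_assoc, this, h2]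
          ring
      have htd : ∀ i : Fin k, tder (fun x (_ : ℝ) => S.v0 x) i x t = 0 := by
        intro i; simp [tder]
      have hsg : ∀ i : Fin k, sgrad (fun x (_ : ℝ) => S.v0 x) i x t
          = gradient (fun y => S.v0 y i) x := fun i => rfl
      simp only [htd, hsg, hinter, hg, zero_pow, Finset.sum_const_zero, ne_eq,
        OfNat.ofNat_ne_zero, not_false_iff]
      ring
    rw [integral_congr_ae hae, integral_const_mul, mul_assoc]
  rw [Jeb]
  simp only [key]
  rw [integral_mul_const, integral_exp_neg_Ioi_zero, one_mul]

/-- Lower bound for `J_{ε,β}` on arbitrary functions. -/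
lemma Jeb_lower (S : Setting N k) {ε β : ℝ} (hε : 0 < ε) (hβ : 0 < β)
    (u : Pt N → ℝ → Fin k → ℝ) {c : ℝ} (hc : 0 ≤ c)
    (hFb : ∀ x t, 2 * ∑ i, S.Fc i (u x t i) ≤ c) :
    -(ε * (c * (volume S.Ω).toReal)) ≤ Jeb S ε β u := by
  have hm : volume S.Ω < ⊤ := S.hΩbdd.measure_lt_top
  set m : ℝ := (volume S.Ω).toReal with hmdef
  have hm0 : 0 ≤ m := ENNReal.toReal_nonneg
  set h : Pt N → ℝ → ℝ := fun x t => Real.exp (-t) * (∑ i, (tder u i x t)^2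
      + ε * (∑ i, ‖sgrad u i x t‖^2 - 2 * ∑ i, S.Fc i (u x t i)
        + (β/2) * ∑ i, ∑ j, S.A i j * (u x t i)^2 * (u x t j)^2)) with hh
  have hpt : ∀ x t, -(Real.exp (-t) * (ε * c)) ≤ h x t := by
    intro x t
    have e : (0:ℝ) < Real.exp (-t) := Real.exp_pos _
    have h1 : (0:ℝ) ≤ ∑ i, (tder u i x t)^2 :=
      Finset.sum_nonneg fun i _ => sq_nonneg _
    have h2 : (0:ℝ) ≤ ∑ i, ‖sgrad u i x t‖^2 :=
      Finset.sum_nonneg fun i _ => sq_nonneg _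
    have h3 : (0:ℝ) ≤ ∑ i, ∑ j, S.A i j * (u x t i)^2 * (u x t j)^2 := by
      apply Finset.sum_nonneg; intro i _
      apply Finset.sum_nonneg; intro j _
      have hA : 0 ≤ S.A i j := by
        rcases eq_or_ne i j with rfl | hij
        · simp [S.hAdiag]
        · exact (S.hAoff i j hij).le
      exact mul_nonneg (mul_nonneg hA (sq_nonneg _)) (sq_nonneg _)
    have h4 := hFb x t
    have hin : -(ε * c) ≤ ∑ i, (tder u i x t)^2
        + ε * (∑ i, ‖sgrad u i x t‖^2 - 2 * ∑ i, S.Fc i (u x t i)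
          + (β/2) * ∑ i, ∑ j, S.A i j * (u x t i)^2 * (u x t j)^2) := by
      nlinarith [mul_nonneg hε.le h2, mul_le_mul_of_nonneg_left h4 hε.le,
        mul_nonneg (mul_nonneg hε.le (by linarith : (0:ℝ) ≤ β/2)) h3]
    have := mul_le_mul_of_nonneg_left hin e.le
    rw [hh]
    nlinarith
  set φ : ℝ → ℝ := fun t => ∫ x in S.Ω, h x t with hφ
  have hinner : ∀ t : ℝ, -(Real.exp (-t) * (ε * c)) * m ≤ φ t := by
    intro t
    by_cases hI : Integrable (fun x => h x t) (volume.restrict S.Ω)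
    · have hcint : Integrable (fun _ : Pt N => -(Real.exp (-t) * (ε * c)))
          (volume.restrict S.Ω) := by
        apply integrable_const_iff.mpr
        right
        exact ⟨by rwa [Measure.restrict_apply_univ]⟩
      have := integral_mono hcint hI (fun x => hpt x t)
      rw [setIntegral_const, smul_eq_mul] at this
      rw [mul_comm]; exact this
    · rw [hφ]
      simp only
      rw [integral_undef hI]
      have : -(Real.exp (-t) * (ε * c)) ≤ 0 := by
        have : (0:ℝ) ≤ Real.exp (-t) * (ε * c) :=
          mul_nonneg (Real.exp_pos _).le (mul_nonneg hε.le hc)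
        linarith
      exact mul_nonpos_of_nonpos_of_nonneg this hm0
  have hΨint : IntegrableOn (fun t => -(Real.exp (-t) * (ε * c)) * m)
      (Set.Ioi (0:ℝ)) volume := by
    have hbase : IntegrableOn (fun t : ℝ => Real.exp (-t)) (Set.Ioi (0:ℝ)) volume := by
      have := exp_neg_integrableOn_Ioi 0 (one_pos)
      simpa using this
    have h2 : IntegrableOn (fun t : ℝ => Real.exp (-t) * (-(ε * c) * m))
        (Set.Ioi (0:ℝ)) volume := hbase.mul_const (-(ε * c) * m)
    exact h2.congr_fun (fun t _ => by ring) measurableSet_Ioi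
  have hΨval : (∫ t in Set.Ioi (0:ℝ), -(Real.exp (-t) * (ε * c)) * m)
      = -(ε * (c * m)) := by
    have : (fun t => -(Real.exp (-t) * (ε * c)) * m)
        = fun t => Real.exp (-t) * (-(ε * (c * m))) := by
      funext t; ring
    rw [this, integral_mul_const, integral_exp_neg_Ioi_zero, one_mul]
  have hJ : Jeb S ε β u = ∫ t in Set.Ioi (0:ℝ), φ t := rfl
  rw [hJ]
  by_cases hIφ : Integrable φ (volume.restrict (Set.Ioi (0:ℝ)))
  · have := integral_mono hΨint hIφ hinner
    rwa [hΨval] at this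
  · rw [integral_undef hIφ]
    have : (0:ℝ) ≤ ε * (c * m) := mul_nonneg hε.le (mul_nonneg hc hm0)
    linarith

end Aux

/-- Lemma 4.1, level estimate: for `U₀` either `U_{v₀,g₀}` or `U_{v₀}`,
there is a constant `C` (independent of `ε ∈ (0,1)` and `β > 0`) such that every minimizer
`u` of `J_{ε,β}` on `U₀` satisfies `|J_{ε,β}(u)| ≤ C ε`. -/
theorem stmt_2 {N k : ℕ} (S : Setting N k)
    (U0 : Set (Pt N → ℝ → Fin k → ℝ))
    (hU0 : U0 = Uboth S ∨ U0 = Uinit S) :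
    ∃ C : ℝ, ∀ ε ∈ Set.Ioo (0:ℝ) 1, ∀ β > (0:ℝ), ∀ u ∈ U0,
      (∀ w ∈ U0, Jeb S ε β u ≤ Jeb S ε β w) → |Jeb S ε β u| ≤ C * ε := by
  obtain ⟨M, hM⟩ : ∃ M : Fin k → ℝ, ∀ i, 0 ≤ M i ∧ ∀ s : ℝ, S.Fc i s ≤ M i := by
    choose M hM using fun i => Fc_bound S i
    exact ⟨M, hM⟩
  set c : ℝ := 2 * ∑ i, M i with hcdef
  have hc : 0 ≤ c := by
    have : (0:ℝ) ≤ ∑ i, M i := Finset.sum_nonneg fun i _ => (hM i).1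
    positivity
  set m : ℝ := (volume S.Ω).toReal with hmdef
  have hm0 : (0:ℝ) ≤ m := ENNReal.toReal_nonneg
  set C0 : ℝ := ∫ x in S.Ω, (∑ i, ‖gradient (fun y => S.v0 y i) x‖^2
      - 2 * ∑ i, S.Fc i (S.v0 x i)) with hC0
  refine ⟨max C0 (c * m), ?_⟩
  intro ε hε β hβ u hu hmin
  set w0 : Pt N → ℝ → Fin k → ℝ := fun x _ => S.v0 x with hw0
  have hw0U : w0 ∈ U0 := by
    have h1 : memU S.Ω w0 := static_memU S
    have h2 : initCond S w0 := Filter.Eventually.of_forall fun x => rfl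
    have h3 : bdryCond S w0 := Filter.Eventually.of_forall fun t x _ => rfl
    rcases hU0 with rfl | rfl
    · exact ⟨h1, h2, h3⟩
    · exact ⟨h1, h2⟩
  have hupper : Jeb S ε β u ≤ ε * C0 := by
    have := hmin w0 hw0U
    rwa [Jeb_static S ε β] at this
  have hlower : -(ε * (c * m)) ≤ Jeb S ε β u := by
    refine Jeb_lower S hε.1 hβ u hc ?_
    intro x t
    have : ∑ i, S.Fc i (u x t i) ≤ ∑ i, M i :=
      Finset.sum_le_sum fun i _ => (hM i).2 (u x t i)
    rw [hcdef]
    linarith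
  rw [abs_le]
  constructor
  · have h1 : c * m ≤ max C0 (c * m) := le_max_right _ _
    have : -(max C0 (c * m) * ε) ≤ -(ε * (c * m)) := by
      rw [neg_le_neg_iff]
      calc ε * (c * m) = (c * m) * ε := by ring
        _ ≤ max C0 (c * m) * ε := mul_le_mul_of_nonneg_right h1 hε.1.le
    linarith
  · calc Jeb S ε β u ≤ ε * C0 := hupper
      _ ≤ ε * max C0 (c * m) := mul_le_mul_of_nonneg_left (le_max_left _ _) hε.1.le
      _ = max C0 (c * m) * ε := by ring
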